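/- Convex-conjugate pair for f-weighted Rényi entropies: fix α ∈ (1,∞) and a normalized state ρ on Q⊗Q'⊗Ĉ classical on Ĉ with alphabet 𝒞̂. Define G_{α,ρ} : ℝ^{|𝒞̂|} → ℝ by G_{α,ρ}(f) = −H_α^{↑,f}(Q | Ĉ Q')_ρ = (α/(α−1)) log( Σ_{ĉ: ρ(ĉ)>0} ρ(ĉ) 2^{((α−1)/α)( f(ĉ) − H_α↑(Q|Q')_{ρ_{|ĉ}} )} ), and define G*_{α,ρ} : ℝ^{|𝒞̂|} → ℝ∪{+∞} by G*_{α,ρ}(λ) = (α/(α−1)) D(λ ‖ ρ_Ĉ) + Σ_{ĉ: ρ(ĉ)>0} λ(ĉ) H_α↑(Q|Q')_{ρ_{|ĉ}} if λ is a probability distribution on 𝒞̂, and G*_{α,ρ}(λ) = +∞ otherwise, where D is the Kullback–Leibler divergence (base 2, equal to +∞ if supp(λ) ⊄ supp(ρ_Ĉ)) and ρ_Ĉ is the distribution induced by ρ on Ĉ. Then G_{α,ρ} and G*_{α,ρ} are both convex, and each is the Legendre–Fenchel convex conjugate of the other. -/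

import Mathlib

open scoped BigOperators Kronecker ENNReal ComplexOrder Classical
open Matrix Filter

noncomputable section
namespace QIT

variable {A B C D A' B' : Type*}

/-- Real part of the trace. -/
def rtr [Fintype A] (M : Matrix A A ℂ) : ℝ := M.trace.re

/-- A (normalized) quantum state. -/
def IsState [Fintype A] (ρ : Matrix A A ℂ) : Prop := ρ.PosSemidef ∧ ρ.trace = 1

/-- Partial trace over the second tensor factor. -/
def ptrR [Fintype B] (ρ : Matrix (A × B) (A × B) ℂ) : Matrix A A ℂ :=
  Matrix.of fun i j => ∑ k, ρ (i, k) (j, k)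

/-- Partial trace over the first tensor factor. -/
def ptrL [Fintype A] (ρ : Matrix (A × B) (A × B) ℂ) : Matrix B B ℂ :=
  Matrix.of fun i j => ∑ k, ρ (k, i) (k, j)

/-- Real power of a Hermitian matrix (Moore–Penrose convention, `0 ^ p = 0` for `p ≠ 0`),
via the spectral decomposition.  Junk value `0` on non-Hermitian input. -/
def hpow [Fintype A] [DecidableEq A] (M : Matrix A A ℂ) (p : ℝ) : Matrix A A ℂ :=
  if h : M.IsHermitian then
    (h.eigenvectorUnitary : Matrix A A ℂ) *
      Matrix.diagonal (fun i => ((h.eigenvalues i ^ p : ℝ) : ℂ)) *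
      star (h.eigenvectorUnitary : Matrix A A ℂ)
  else 0

/-- Base-2 logarithm of a Hermitian matrix (`log 0 = 0` on the kernel). -/
def hlog [Fintype A] [DecidableEq A] (M : Matrix A A ℂ) : Matrix A A ℂ :=
  if h : M.IsHermitian then
    (h.eigenvectorUnitary : Matrix A A ℂ) *
      Matrix.diagonal (fun i => ((Real.logb 2 (h.eigenvalues i) : ℝ) : ℂ)) *
      star (h.eigenvectorUnitary : Matrix A A ℂ)
  else 0

/-- Support inclusion `supp ρ ⊆ supp σ` for positive semidefinite matrices,
phrased as inclusion of kernels. -/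
def SuppLE [Fintype A] (ρ σ : Matrix A A ℂ) : Prop :=
  ∀ v : A → ℂ, σ.mulVec v = 0 → ρ.mulVec v = 0

/-- Sandwiched Rényi divergence (base 2) with real parameter `α`; `α = 1` is the
Umegaki divergence.  The value is `⊤` when the support conditions fail. -/
def sandD [Fintype A] [DecidableEq A] (α : ℝ) (ρ σ : Matrix A A ℂ) : EReal :=
  if α = 1 then
    (if SuppLE ρ σ then (((rtr (ρ * (hlog ρ - hlog σ))) / rtr ρ : ℝ) : EReal) else ⊤)
  else if (α < 1 ∧ ρ * σ ≠ 0) ∨ SuppLE ρ σ then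
    (((1 / (α - 1)) * Real.logb 2
      (rtr (hpow (hpow σ ((1 - α) / (2 * α)) * ρ * hpow σ ((1 - α) / (2 * α))) α) / rtr ρ) : ℝ) : EReal)
  else ⊤

/-- Sandwiched Rényi divergence with extended parameter `α ∈ [0,∞]`; the boundary
values are defined by the corresponding limits. -/
def sandDE [Fintype A] [DecidableEq A] (α : ℝ≥0∞) (ρ σ : Matrix A A ℂ) : EReal :=
  if α = ⊤ then Filter.limsup (fun a : ℝ => sandD a ρ σ) Filter.atTop
  else if α = 0 then Filter.limsup (fun a : ℝ => sandD a ρ σ) (nhdsWithin 0 (Set.Ioi 0))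
  else sandD α.toReal ρ σ

/-- Conditional Rényi entropy `H_α(A|B)`. -/
def condH [Fintype A] [DecidableEq A] [Fintype B] [DecidableEq B]
    (α : ℝ≥0∞) (ρ : Matrix (A × B) (A × B) ℂ) : EReal :=
  - sandDE α ρ ((1 : Matrix A A ℂ) ⊗ₖ ptrL ρ)

/-- Conditional Rényi entropy `H_α↑(A|B)` (optimized over the conditioning state). -/
def condHup [Fintype A] [DecidableEq A] [Fintype B] [DecidableEq B]
    (α : ℝ≥0∞) (ρ : Matrix (A × B) (A × B) ℂ) : EReal :=
  ⨆ σ : {σ : Matrix B B ℂ // IsState σ}, - sandDE α ρ ((1 : Matrix A A ℂ) ⊗ₖ σ.1)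

/-- Choi matrix of a map on matrices. -/
def choi [Fintype A] [DecidableEq A] (Φ : Matrix A A ℂ → Matrix B B ℂ) :
    Matrix (A × B) (A × B) ℂ :=
  Matrix.of fun p q => Φ (Matrix.single p.1 q.1 1) p.2 q.2

/-- Linearity of a map on matrices. -/
def IsLin (Φ : Matrix A A ℂ → Matrix B B ℂ) : Prop :=
  ∀ (c : ℂ) (M N : Matrix A A ℂ), Φ (c • M + N) = c • Φ M + Φ N

/-- Completely positive map (linear with positive semidefinite Choi matrix). -/
def IsCPMap [Fintype A] [DecidableEq A] [Fintype B] (Φ : Matrix A A ℂ → Matrix B B ℂ) : Prop :=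
  IsLin Φ ∧ (choi Φ).PosSemidef

/-- Quantum channel: completely positive and trace preserving. -/
def IsCPTP [Fintype A] [DecidableEq A] [Fintype B]
    (Φ : Matrix A A ℂ → Matrix B B ℂ) : Prop :=
  IsCPMap Φ ∧ ∀ M, (Φ M).trace = M.trace

/-- Tensor product `Φ ⊗ Ψ` of (linear) maps on matrices, written out entrywise. -/
def kmap [Fintype A] [DecidableEq A] [Fintype C] [DecidableEq C]
    (Φ : Matrix A A ℂ → Matrix B B ℂ) (Ψ : Matrix C C ℂ → Matrix D D ℂ)
    (M : Matrix (A × C) (A × C) ℂ) : Matrix (B × D) (B × D) ℂ :=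
  Matrix.of fun p q => ∑ a : A, ∑ a' : A, ∑ c : C, ∑ c' : C,
    M (a, c) (a', c') * Φ (Matrix.single a a' 1) p.1 q.1 *
      Ψ (Matrix.single c c' 1) p.2 q.2

/-- Marginal-constrained Rényi channel conditional entropy `H_α↑(M, B, [ψ_A])` for a
channel `M ∈ CPTP(A⊗A', B⊗C)`, with stabilizing register `R̃ ≅ A⊗A'`. -/
def chanHup [Fintype A] [DecidableEq A] [Fintype A'] [DecidableEq A']
    [Fintype B] [DecidableEq B] [Fintype C] [DecidableEq C]
    (α : ℝ≥0∞) (M : Matrix (A × A') (A × A') ℂ → Matrix (B × C) (B × C) ℂ)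
    (ψ : Matrix A A ℂ) : EReal :=
  ⨅ ρ : {ρ : Matrix ((A × A') × (A × A')) ((A × A') × (A × A')) ℂ //
      IsState ρ ∧
      ptrR (Matrix.reindex (Equiv.prodAssoc A A' (A × A')) (Equiv.prodAssoc A A' (A × A')) ρ) = ψ},
    condHup α (Matrix.reindex (Equiv.prodAssoc B C (A × A')) (Equiv.prodAssoc B C (A × A'))
      (kmap M id ρ.1))

/-- Tensor power `ψ^{⊗m}` of a state. -/
def statePow [Fintype A] (ψ : Matrix A A ℂ) (m : ℕ) :
    Matrix (Fin m → A) (Fin m → A) ℂ :=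
  Matrix.of fun i j => ∏ k, ψ (i k) (j k)

/-- Tensor power `Φ^{⊗m}` of a (linear) map on matrices. -/
def funPow [Fintype A] [DecidableEq A] (Φ : Matrix A A ℂ → Matrix B B ℂ) (m : ℕ)
    (M : Matrix (Fin m → A) (Fin m → A) ℂ) : Matrix (Fin m → B) (Fin m → B) ℂ :=
  Matrix.of fun p q => ∑ a : Fin m → A, ∑ b : Fin m → A,
    M a b * ∏ i, Φ (Matrix.single (a i) (b i) 1) (p i) (q i)

/-- Tensor power of a channel between pairs of registers, with the factors regrouped
as `(A^m) × (A'^m) → (B^m) × (C^m)`. -/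
def chanPow [Fintype A] [DecidableEq A] [Fintype A'] [DecidableEq A']
    (Φ : Matrix (A × A') (A × A') ℂ → Matrix (B × C) (B × C) ℂ) (m : ℕ)
    (M : Matrix ((Fin m → A) × (Fin m → A')) ((Fin m → A) × (Fin m → A')) ℂ) :
    Matrix ((Fin m → B) × (Fin m → C)) ((Fin m → B) × (Fin m → C)) ℂ :=
  Matrix.reindex (Equiv.arrowProdEquivProdArrow (Fin m) (fun _ => B) (fun _ => C))
    (Equiv.arrowProdEquivProdArrow (Fin m) (fun _ => B) (fun _ => C))
    (funPow Φ m (Matrix.reindex (Equiv.arrowProdEquivProdArrow (Fin m) (fun _ => A) (fun _ => A')).symm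
      (Equiv.arrowProdEquivProdArrow (Fin m) (fun _ => A) (fun _ => A')).symm M))

/-- `2 ^ x` for `x : EReal`, valued in `ℝ≥0∞`. -/
def e2pow (x : EReal) : ℝ≥0∞ :=
  if x = ⊥ then 0 else if x = ⊤ then ⊤ else ENNReal.ofReal ((2 : ℝ) ^ x.toReal)

/-- Base-2 logarithm `ℝ≥0∞ → EReal`. -/
def elog2 (x : ℝ≥0∞) : EReal :=
  if x = 0 then ⊥ else if x = ⊤ then ⊤ else ((Real.logb 2 x.toReal : ℝ) : EReal)

/-- A matrix is classical along a labelling function `c` if it is block-diagonal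
with respect to the classical label. -/
def IsClassicalAlong {T K : Type*} (c : T → K) (ρ : Matrix T T ℂ) : Prop :=
  ∀ t t', c t ≠ c t' → ρ t t' = 0


section FWeighted

variable {Kb Kh Q Q' : Type*} [Fintype Kb] [DecidableEq Kb] [Fintype Kh] [DecidableEq Kh]
  [Fintype Q] [DecidableEq Q] [Fintype Q'] [DecidableEq Q']

/-- Joint weight `ρ(c̄,ĉ)` of the classical value `k = (c̄,ĉ)`. -/
def cwt (ρ : Matrix ((Kb × Kh) × (Q × Q')) ((Kb × Kh) × (Q × Q')) ℂ) (k : Kb × Kh) : ℝ :=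
  (∑ q : Q × Q', ρ (k, q) (k, q)).re

/-- Weight `ρ(ĉ)` of the classical value `ĉ`. -/
def hwt (ρ : Matrix ((Kb × Kh) × (Q × Q')) ((Kb × Kh) × (Q × Q')) ℂ) (h : Kh) : ℝ :=
  ∑ b : Kb, cwt ρ (b, h)

/-- Subnormalized block (partial state) on `Q × Q'` for classical value `k`. -/
def cblk (ρ : Matrix ((Kb × Kh) × (Q × Q')) ((Kb × Kh) × (Q × Q')) ℂ) (k : Kb × Kh) :
    Matrix (Q × Q') (Q × Q') ℂ :=
  Matrix.of fun q q' => ρ (k, q) (k, q')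

/-- Normalized conditional state on `Q × Q'` given classical value `k`. -/
def ccond (ρ : Matrix ((Kb × Kh) × (Q × Q')) ((Kb × Kh) × (Q × Q')) ℂ) (k : Kb × Kh) :
    Matrix (Q × Q') (Q × Q') ℂ :=
  ((cwt ρ k)⁻¹ : ℝ) • cblk ρ k

/-- Inner bracket of the `f`-weighted Rényi entropy:
`[ Σ_{c̄ : ρ(c̄|ĉ)>0} ρ(c̄|ĉ)^α 2^{(α−1)(f(c̄,ĉ)+D_α(ρ_{QQ'|c̄ĉ}‖1_Q⊗σ))} ]^{1/α}`. -/
def HfInner (α : ℝ) (f : Kb × Kh → ℝ)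
    (ρ : Matrix ((Kb × Kh) × (Q × Q')) ((Kb × Kh) × (Q × Q')) ℂ) (h : Kh)
    (σ : Matrix Q' Q' ℂ) : ℝ≥0∞ :=
  (∑ b : Kb, if cwt ρ (b, h) = 0 then 0 else
    ENNReal.ofReal ((cwt ρ (b, h) / hwt ρ h) ^ α) *
      e2pow (((α - 1 : ℝ) : EReal) * (((f (b, h) : ℝ) : EReal) +
        sandD α (ccond ρ (b, h)) ((1 : Matrix Q Q ℂ) ⊗ₖ σ)))) ^ (1 / α)

/-- `f`-weighted Rényi entropy `H_α^{↑,f}(Q C̄ | Ĉ Q')` for real parameter `α ≠ 1`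
(for `α > 1` the inner optimization is an infimum, for `α < 1` a supremum). -/
def HfR (α : ℝ) (f : Kb × Kh → ℝ)
    (ρ : Matrix ((Kb × Kh) × (Q × Q')) ((Kb × Kh) × (Q × Q')) ℂ) : EReal :=
  ((α / (1 - α) : ℝ) : EReal) * elog2 (∑ h : Kh,
    if hwt ρ h = 0 then 0 else ENNReal.ofReal (hwt ρ h) *
      (if 1 < α then ⨅ σ : {σ : Matrix Q' Q' ℂ // IsState σ}, HfInner α f ρ h σ.1
       else ⨆ σ : {σ : Matrix Q' Q' ℂ // IsState σ}, HfInner α f ρ h σ.1))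

/-- `f`-weighted Rényi entropy with extended parameter (the values at `α = 1, ∞` are
defined by the corresponding limits). -/
def Hf (α : ℝ≥0∞) (f : Kb × Kh → ℝ)
    (ρ : Matrix ((Kb × Kh) × (Q × Q')) ((Kb × Kh) × (Q × Q')) ℂ) : EReal :=
  if α = ⊤ then Filter.limsup (fun a : ℝ => HfR a f ρ) Filter.atTop
  else if α = 1 then Filter.limsup (fun a : ℝ => HfR a f ρ) (nhdsWithin 1 (Set.Ioi 1))
  else HfR α.toReal f ρ

end FWeighted

/-- Classical Rényi divergence of order `α` (base 2) between two (sub)distributions,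
`α = 1` being the Kullback–Leibler divergence. -/
def clD {X : Type*} [Fintype X] (α : ℝ) (p q : X → ℝ) : EReal :=
  if α = 1 then
    (if (∀ x, q x = 0 → p x = 0) then
      (((∑ x, if p x = 0 then 0 else p x * Real.logb 2 (p x / q x)) / ∑ x, p x : ℝ) : EReal)
     else ⊤)
  else if (α < 1 ∧ ∃ x, p x ≠ 0 ∧ q x ≠ 0) ∨ (∀ x, q x = 0 → p x = 0) then
    (((1 / (α - 1)) * Real.logb 2
      ((∑ x, if p x = 0 then 0 else p x ^ α * q x ^ (1 - α)) / ∑ x, p x) : ℝ) : EReal)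
  else ⊤

/-- Measured Rényi divergence: supremum over all finite-outcome POVMs of the
classical Rényi divergence of the induced outcome distributions. -/
def measD {A : Type*} [Fintype A] [DecidableEq A] (α : ℝ) (ρ σ : Matrix A A ℂ) : EReal :=
  ⨆ k : ℕ, ⨆ M : {M : Fin k → Matrix A A ℂ // (∀ x, (M x).PosSemidef) ∧ ∑ x, M x = 1},
    clD α (fun x => rtr (M.1 x * ρ)) (fun x => rtr (M.1 x * σ))


section Conjugate

variable {Kh Q Q' : Type*} [Fintype Kh] [DecidableEq Kh]
  [Fintype Q] [DecidableEq Q] [Fintype Q'] [DecidableEq Q']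

/-- Probability `ρ(ĉ)` of the classical value `ĉ` for a state on `Ĉ⊗(Q⊗Q')`. -/
def hprob (ρ : Matrix (Kh × (Q × Q')) (Kh × (Q × Q')) ℂ) (h : Kh) : ℝ :=
  (∑ q : Q × Q', ρ (h, q) (h, q)).re

/-- Normalized conditional state on `Q⊗Q'` given `Ĉ = ĉ`. -/
def hcondSt (ρ : Matrix (Kh × (Q × Q')) (Kh × (Q × Q')) ℂ) (h : Kh) :
    Matrix (Q × Q') (Q × Q') ℂ :=
  ((hprob ρ h)⁻¹ : ℝ) • Matrix.of fun q q' => ρ (h, q) (h, q')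

/-- `G_{α,ρ}(f) = −H_α^{↑,f}(Q | Ĉ Q')_ρ
  = (α/(α−1)) log( Σ_{ĉ:ρ(ĉ)>0} ρ(ĉ) 2^{((α−1)/α)(f(ĉ) − H_α↑(Q|Q')_{ρ_{|ĉ}})} )`. -/
def Gfun (α : ℝ) (ρ : Matrix (Kh × (Q × Q')) (Kh × (Q × Q')) ℂ) (f : Kh → ℝ) : ℝ :=
  (α / (α - 1)) * Real.logb 2 (∑ h : Kh, if hprob ρ h = 0 then 0 else
    hprob ρ h * (2 : ℝ) ^ (((α - 1) / α) *
      (f h - (condHup (ENNReal.ofReal α) (hcondSt ρ h)).toReal)))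

/-- `G*_{α,ρ}(λ)`, equal to `(α/(α−1)) D(λ‖ρ_Ĉ) + Σ_{ĉ:ρ(ĉ)>0} λ(ĉ) H_α↑(Q|Q')_{ρ_{|ĉ}}`
when `λ` is a probability distribution on `𝒞̂` and `+∞` otherwise. -/
def Gstar (α : ℝ) (ρ : Matrix (Kh × (Q × Q')) (Kh × (Q × Q')) ℂ) (lam : Kh → ℝ) : EReal :=
  if (∀ h, 0 ≤ lam h) ∧ ∑ h, lam h = 1 then
    ((α / (α - 1) : ℝ) : EReal) * clD 1 lam (hprob ρ) +
      ((∑ h : Kh, if hprob ρ h = 0 then 0 else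
        lam h * (condHup (ENNReal.ofReal α) (hcondSt ρ h)).toReal : ℝ) : EReal)
  else ⊤

namespace QITAux
open Finset
variable {ι : Type*} [Fintype ι]

noncomputable section

def Zf (B : ℝ) (p E f : ι → ℝ) : ℝ :=
  ∑ i, if p i = 0 then 0 else p i * (2:ℝ) ^ (B * (f i - E i))

def Gf (A B : ℝ) (p E f : ι → ℝ) : ℝ := A * Real.logb 2 (Zf B p E f)

def Dsum (p lam : ι → ℝ) : ℝ :=
  ∑ i, if lam i = 0 then 0 else lam i * Real.logb 2 (lam i / p i)

def Esum (p E lam : ι → ℝ) : ℝ :=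
  ∑ i, if p i = 0 then 0 else lam i * E i

def Gs (A : ℝ) (p E lam : ι → ℝ) : ℝ := A * Dsum p lam + Esum p E lam

def lamstar (B : ℝ) (p E f : ι → ℝ) : ι → ℝ :=
  fun i => if p i = 0 then 0 else (p i * (2:ℝ) ^ (B * (f i - E i))) / Zf B p E f

variable {A B : ℝ} {p E f lam : ι → ℝ}

lemma exists_p_ne (hp1 : ∑ i, p i = 1) : ∃ i, p i ≠ 0 := by
  by_contra h
  push_neg at h
  simp [h] at hp1

omit [Fintype ι] in
lemma Zf_term_nonneg (hp0 : ∀ i, 0 ≤ p i) (i : ι) :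
    0 ≤ if p i = 0 then 0 else p i * (2:ℝ) ^ (B * (f i - E i)) := by
  by_cases h : p i = 0
  · simp [h]
  · simp only [h, if_false]
    exact mul_nonneg (hp0 i) (Real.rpow_nonneg (by norm_num) _)

lemma Zf_pos (hp0 : ∀ i, 0 ≤ p i) (hp1 : ∑ i, p i = 1) : 0 < Zf B p E f := by
  obtain ⟨i, hi⟩ := exists_p_ne hp1
  refine Finset.sum_pos' (fun j _ => Zf_term_nonneg hp0 j) ⟨i, mem_univ i, ?_⟩
  simp only [hi, if_false]
  exact mul_pos (lt_of_le_of_ne (hp0 i) (Ne.symm hi)) (Real.rpow_pos_of_pos (by norm_num) _)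

lemma concave_logb2 : ConcaveOn ℝ (Set.Ioi 0) (Real.logb 2) := by
  have h := (strictConcaveOn_log_Ioi.concaveOn).smul
    (c := (Real.log 2)⁻¹) (by positivity)
  suffices e : Real.logb 2 = fun x => (Real.log 2)⁻¹ • Real.log x by rw [e]; exact h
  funext x
  simp only [Pi.smul_apply, smul_eq_mul, ← Real.log_div_log]
  ring

/-- Gibbs' inequality / Fenchel–Young. -/
lemma gibbs (hB : 0 < B) (hA : A = 1 / B)
    (hp0 : ∀ i, 0 ≤ p i) (hp1 : ∑ i, p i = 1)
    (h0 : ∀ i, 0 ≤ lam i) (h1 : ∑ i, lam i = 1) (hs : ∀ i, p i = 0 → lam i = 0) :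
    ∑ i, f i * lam i ≤ Gf A B p E f + Gs A p E lam := by
  have hApos : 0 < A := by rw [hA]; positivity
  set t : Finset ι := univ.filter (fun i => lam i ≠ 0) with ht
  have hmem : ∀ i ∈ t, lam i ≠ 0 := fun i hi => (mem_filter.mp hi).2
  have hoff : ∀ i ∈ univ, i ∉ t → lam i = 0 := by
    intro i _ hi
    by_contra h
    exact hi (mem_filter.mpr ⟨mem_univ i, h⟩)
  have hlampos : ∀ i ∈ t, 0 < lam i := fun i hi => lt_of_le_of_ne (h0 i) (Ne.symm (hmem i hi))
  have hppos : ∀ i ∈ t, 0 < p i := by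
    intro i hi
    rcases eq_or_lt_of_le (hp0 i) with h | h
    · exact absurd (hs i h.symm) (hmem i hi)
    · exact h
  set a : ι → ℝ := fun i => p i * (2:ℝ) ^ (B * (f i - E i)) with ha
  have hapos : ∀ i ∈ t, 0 < a i := fun i hi =>
    mul_pos (hppos i hi) (Real.rpow_pos_of_pos (by norm_num) _)
  have ht1 : ∑ i ∈ t, lam i = 1 := by rw [ht, Finset.sum_filter_ne_zero]; exact h1
  -- Jensen
  have jensen : ∑ i ∈ t, lam i * Real.logb 2 (a i / lam i) ≤
      Real.logb 2 (∑ i ∈ t, lam i * (a i / lam i)) := by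
    have := concave_logb2.le_map_sum (t := t) (w := lam) (p := fun i => a i / lam i)
      (fun i hi => h0 i) ht1 (fun i hi => Set.mem_Ioi.mpr (div_pos (hapos i hi) (hlampos i hi)))
    simpa [smul_eq_mul] using this
  have hsum_eq : ∑ i ∈ t, lam i * (a i / lam i) = ∑ i ∈ t, a i :=
    Finset.sum_congr rfl fun i hi => by
      rw [mul_comm, div_mul_cancel₀ _ (hmem i hi)]
  have hZa : ∑ i ∈ t, a i ≤ Zf B p E f := by
    rw [Zf]
    calc ∑ i ∈ t, a i = ∑ i ∈ t, (if p i = 0 then 0 else a i) :=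
          Finset.sum_congr rfl fun i hi => by rw [if_neg (hppos i hi).ne']
      _ ≤ ∑ i, if p i = 0 then 0 else a i :=
          Finset.sum_le_sum_of_subset_of_nonneg (subset_univ t)
            (fun i _ _ => Zf_term_nonneg hp0 i)
  have htne : t.Nonempty := by
    rcases Finset.eq_empty_or_nonempty t with h | h
    · exfalso; rw [h] at ht1; simp at ht1
    · exact h
  have hsum_pos : 0 < ∑ i ∈ t, a i := Finset.sum_pos hapos htne
  have hmono : Real.logb 2 (∑ i ∈ t, a i) ≤ Real.logb 2 (Zf B p E f) :=
    Real.logb_le_logb_of_le (by norm_num) hsum_pos hZa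
  -- identity
  have hident : ∑ i, f i * lam i =
      Gs A p E lam + A * ∑ i ∈ t, lam i * Real.logb 2 (a i / lam i) := by
    have e1 : ∑ i ∈ t, f i * lam i = ∑ i, f i * lam i :=
      Finset.sum_subset (subset_univ t) (fun i h1' h2 => by rw [hoff i h1' h2, mul_zero])
    have e2 : Dsum p lam = ∑ i ∈ t, lam i * Real.logb 2 (lam i / p i) := by
      rw [Dsum, ← Finset.sum_subset (subset_univ t)
        (fun i h1' h2 => by rw [if_pos (hoff i h1' h2)])]
      exact Finset.sum_congr rfl fun i hi => by rw [if_neg (hmem i hi)]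
    have e3 : Esum p E lam = ∑ i ∈ t, lam i * E i := by
      rw [Esum, ← Finset.sum_subset (subset_univ t)
        (fun i h1' h2 => by by_cases h : p i = 0 <;> simp [h, hoff i h1' h2])]
      exact Finset.sum_congr rfl fun i hi => by rw [if_neg (hppos i hi).ne']
    rw [← e1, Gs, e2, e3, Finset.mul_sum, Finset.mul_sum, ← Finset.sum_add_distrib,
      ← Finset.sum_add_distrib]
    refine Finset.sum_congr rfl fun i hi => ?_
    rw [Real.logb_div (hapos i hi).ne' (hmem i hi),
      Real.logb_mul (hppos i hi).ne' (Real.rpow_pos_of_pos (by norm_num) _).ne',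
      Real.logb_rpow (by norm_num) (by norm_num),
      Real.logb_div (hmem i hi) (hppos i hi).ne', hA]
    field_simp
    ring
  rw [hident, add_comm (Gf A B p E f)]
  refine add_le_add_right ?_ _
  rw [Gf]
  exact mul_le_mul_of_nonneg_left (le_trans jensen (by rw [hsum_eq]; exact hmono)) hApos.le

lemma lamstar_nonneg (hp0 : ∀ i, 0 ≤ p i) (hp1 : ∑ i, p i = 1) (i : ι) :
    0 ≤ lamstar B p E f i := by
  rw [lamstar]
  by_cases h : p i = 0
  · simp [h]
  · simp only [h, if_false]
    exact div_nonneg (mul_nonneg (hp0 i) (Real.rpow_nonneg (by norm_num) _)) (Zf_pos hp0 hp1).le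

lemma lamstar_supp (i : ι) (h : p i = 0) : lamstar B p E f i = 0 := by
  rw [lamstar, if_pos h]

lemma lamstar_sum (hp0 : ∀ i, 0 ≤ p i) (hp1 : ∑ i, p i = 1) :
    ∑ i, lamstar B p E f i = 1 := by
  have hZ := Zf_pos (E := E) (f := f) (B := B) hp0 hp1
  have : ∀ i, lamstar B p E f i =
      (if p i = 0 then 0 else p i * (2:ℝ) ^ (B * (f i - E i))) / Zf B p E f := by
    intro i
    rw [lamstar]
    by_cases h : p i = 0 <;> simp [h]
  rw [Finset.sum_congr rfl fun i _ => this i, ← Finset.sum_div, ← Zf, div_self hZ.ne']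

/-- Equality case: the Gibbs distribution attains the bound. -/
lemma attain (hB : 0 < B) (hA : A = 1 / B)
    (hp0 : ∀ i, 0 ≤ p i) (hp1 : ∑ i, p i = 1) :
    ∑ i, f i * lamstar B p E f i = Gf A B p E f + Gs A p E (lamstar B p E f) := by
  have hZ := Zf_pos (E := E) (f := f) (B := B) hp0 hp1
  set S : Finset ι := univ.filter (fun i => p i ≠ 0) with hS
  have hmem : ∀ i ∈ S, p i ≠ 0 := fun i hi => (mem_filter.mp hi).2
  have hoff : ∀ i ∈ univ, i ∉ S → p i = 0 := by
    intro i _ hi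
    by_contra h
    exact hi (mem_filter.mpr ⟨mem_univ i, h⟩)
  have hppos : ∀ i ∈ S, 0 < p i := fun i hi => lt_of_le_of_ne (hp0 i) (Ne.symm (hmem i hi))
  set a : ι → ℝ := fun i => p i * (2:ℝ) ^ (B * (f i - E i)) with ha
  have hapos : ∀ i ∈ S, 0 < a i := fun i hi =>
    mul_pos (hppos i hi) (Real.rpow_pos_of_pos (by norm_num) _)
  have hls : ∀ i ∈ S, lamstar B p E f i = a i / Zf B p E f := fun i hi => by
    rw [lamstar, if_neg (hmem i hi)]
  have hlspos : ∀ i ∈ S, 0 < lamstar B p E f i := fun i hi => by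
    rw [hls i hi]; exact div_pos (hapos i hi) hZ
  have hSsum : ∑ i ∈ S, lamstar B p E f i = 1 := by
    rw [Finset.sum_subset (subset_univ S) (fun i h1' h2 => lamstar_supp i (hoff i h1' h2))]
    exact lamstar_sum hp0 hp1
  have e1 : ∑ i ∈ S, f i * lamstar B p E f i = ∑ i, f i * lamstar B p E f i :=
    Finset.sum_subset (subset_univ S)
      (fun i h1' h2 => by rw [lamstar_supp i (hoff i h1' h2), mul_zero])
  have e2 : Dsum p (lamstar B p E f) =
      ∑ i ∈ S, lamstar B p E f i * Real.logb 2 (lamstar B p E f i / p i) := by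
    rw [Dsum, ← Finset.sum_subset (subset_univ S)
      (fun i h1' h2 => by rw [if_pos (lamstar_supp i (hoff i h1' h2))])]
    exact Finset.sum_congr rfl fun i hi => by rw [if_neg (hlspos i hi).ne']
  have e3 : Esum p E (lamstar B p E f) = ∑ i ∈ S, lamstar B p E f i * E i := by
    rw [Esum, ← Finset.sum_subset (subset_univ S)
      (fun i h1' h2 => by rw [if_pos (hoff i h1' h2)])]
    exact Finset.sum_congr rfl fun i hi => by rw [if_neg (hmem i hi)]
  have e4 : Gf A B p E f = ∑ i ∈ S, lamstar B p E f i * (A * Real.logb 2 (Zf B p E f)) := by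
    rw [← Finset.sum_mul, hSsum, one_mul, Gf]
  rw [← e1, Gs, e2, e3, e4, Finset.mul_sum, ← Finset.sum_add_distrib, ← Finset.sum_add_distrib]
  refine Finset.sum_congr rfl fun i hi => ?_
  rw [hls i hi, div_div, Real.logb_div (hapos i hi).ne' (mul_pos hZ (hppos i hi)).ne',
    Real.logb_mul (hppos i hi).ne' (Real.rpow_pos_of_pos (by norm_num) _).ne',
    Real.logb_rpow (by norm_num) (by norm_num),
    Real.logb_mul hZ.ne' (hppos i hi).ne', hA]
  field_simp
  ring

end
end QITAux

namespace Part2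
open Finset

open QITAux

variable {ι : Type*} [Fintype ι] {A B : ℝ} {p E f g lam : ι → ℝ}

noncomputable section

lemma psi_convex : ConvexOn ℝ (Set.Ici 0) (fun u : ℝ => u * Real.logb 2 u) := by
  have h := Real.convexOn_mul_log.smul (c := (Real.log 2)⁻¹) (by positivity)
  suffices e : (fun u : ℝ => u * Real.logb 2 u) = fun x => (Real.log 2)⁻¹ • (x * Real.log x) by
    rw [e]; exact h
  funext u
  simp only [Pi.smul_apply, smul_eq_mul, Real.logb]
  ring

omit [Fintype ι] in
lemma termval {pi : ℝ} (hpi : pi ≠ 0) (u : ℝ) (hu : 0 ≤ u) :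
    (if u = 0 then (0:ℝ) else u * Real.logb 2 (u / pi)) =
      u * Real.logb 2 u - u * Real.logb 2 pi := by
  by_cases h : u = 0
  · simp [h]
  · rw [if_neg h, Real.logb_div h hpi]
    ring

/-- Convexity of `Gs` on the supported simplex. -/
lemma gs_convex (hA : 0 ≤ A)
    {x y : ι → ℝ} (hx0 : ∀ i, 0 ≤ x i) (hxs : ∀ i, p i = 0 → x i = 0)
    (hy0 : ∀ i, 0 ≤ y i) (hys : ∀ i, p i = 0 → y i = 0)
    {t : ℝ} (ht0 : 0 ≤ t) (ht1 : t ≤ 1) :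
    Gs A p E (fun i => t * x i + (1 - t) * y i) ≤
      t * Gs A p E x + (1 - t) * Gs A p E y := by
  have ht1' : 0 ≤ 1 - t := by linarith
  have hE : Esum p E (fun i => t * x i + (1 - t) * y i) =
      t * Esum p E x + (1 - t) * Esum p E y := by
    rw [Esum, Esum, Esum, Finset.mul_sum, Finset.mul_sum, ← Finset.sum_add_distrib]
    refine Finset.sum_congr rfl fun i _ => ?_
    by_cases h : p i = 0 <;> simp [h] <;> ring
  have hD : Dsum p (fun i => t * x i + (1 - t) * y i) ≤
      t * Dsum p x + (1 - t) * Dsum p y := by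
    rw [Dsum, Dsum, Dsum, Finset.mul_sum, Finset.mul_sum, ← Finset.sum_add_distrib]
    refine Finset.sum_le_sum fun i _ => ?_
    by_cases hp : p i = 0
    · simp [hxs i hp, hys i hp]
    · rw [termval hp _ (add_nonneg (mul_nonneg ht0 (hx0 i)) (mul_nonneg ht1' (hy0 i))),
        termval hp _ (hx0 i), termval hp _ (hy0 i)]
      have hψ := psi_convex.2 (Set.mem_Ici.mpr (hx0 i)) (Set.mem_Ici.mpr (hy0 i))
        ht0 ht1' (by ring)
      simp only [smul_eq_mul] at hψ
      nlinarith [hψ]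
  calc Gs A p E (fun i => t * x i + (1 - t) * y i)
      = A * Dsum p (fun i => t * x i + (1 - t) * y i) +
        Esum p E (fun i => t * x i + (1 - t) * y i) := rfl
    _ ≤ A * (t * Dsum p x + (1 - t) * Dsum p y) +
        (t * Esum p E x + (1 - t) * Esum p E y) := by
        rw [hE]
        exact add_le_add_left (mul_le_mul_of_nonneg_left hD hA) _
    _ = t * Gs A p E x + (1 - t) * Gs A p E y := by rw [Gs, Gs]; ring

lemma Gf_congr (hfg : ∀ i, p i ≠ 0 → f i = g i) : Gf A B p E f = Gf A B p E g := by
  rw [Gf, Gf, Zf, Zf]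
  congr 1
  refine congrArg _ (Finset.sum_congr rfl fun i _ => ?_)
  by_cases h : p i = 0
  · simp [h]
  · rw [if_neg h, if_neg h, hfg i h]

lemma Gf_mono (hB : 0 < B) (hA : A = 1 / B)
    (hp0 : ∀ i, 0 ≤ p i) (hp1 : ∑ i, p i = 1) (hfg : ∀ i, f i ≤ g i) :
    Gf A B p E f ≤ Gf A B p E g := by
  have hApos : (0:ℝ) ≤ A := by rw [hA]; positivity
  refine mul_le_mul_of_nonneg_left ?_ hApos
  refine Real.logb_le_logb_of_le (by norm_num) (Zf_pos hp0 hp1) ?_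
  refine Finset.sum_le_sum fun i _ => ?_
  by_cases h : p i = 0
  · simp [h]
  · rw [if_neg h, if_neg h]
    exact mul_le_mul_of_nonneg_left
      (Real.rpow_le_rpow_of_exponent_le (by norm_num)
        (by nlinarith [hfg i, hB])) (hp0 i)

lemma Gf_shift (hB : 0 < B) (hA : A = 1 / B)
    (hp0 : ∀ i, 0 ≤ p i) (hp1 : ∑ i, p i = 1) (t : ℝ) :
    Gf A B p E (fun i => g i + t) = t + Gf A B p E g := by
  have hZ : Zf B p E (fun i => g i + t) = (2:ℝ) ^ (B * t) * Zf B p E g := by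
    rw [Zf, Zf, Finset.mul_sum]
    refine Finset.sum_congr rfl fun i _ => ?_
    by_cases h : p i = 0
    · simp [h]
    · rw [if_neg h, if_neg h]
      have : B * (g i + t - E i) = B * t + B * (g i - E i) := by ring
      rw [this, Real.rpow_add (by norm_num)]
      ring
  rw [Gf, hZ, Real.logb_mul (Real.rpow_pos_of_pos (by norm_num) _).ne'
      (Zf_pos hp0 hp1).ne', Real.logb_rpow (by norm_num) (by norm_num), Gf, hA]
  field_simp

end
end Part2

namespace Part3
open Finset
open QITAux Part2

variable {ι : Type*} [Fintype ι] {A B : ℝ} {p E lam : ι → ℝ}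

noncomputable section

/-- Approximation from below: the conjugate value is approached. -/
lemma approx (hB : 0 < B) (hA : A = 1 / B)
    (hp0 : ∀ i, 0 ≤ p i) (hp1 : ∑ i, p i = 1)
    (h0 : ∀ i, 0 ≤ lam i) (h1 : ∑ i, lam i = 1) (hs : ∀ i, p i = 0 → lam i = 0)
    {x : ℝ} (hx : x < Gs A p E lam) :
    ∃ f : ι → ℝ, x < ∑ i, f i * lam i - Gf A B p E f := by
  have hApos : 0 < A := by rw [hA]; positivity
  set r := Gs A p E lam with hr
  set δ : ℝ := (2:ℝ) ^ (B * (r - x)) - 1 with hδdef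
  have hδ : 0 < δ := by
    have : 1 < (2:ℝ) ^ (B * (r - x)) := by
      rw [Real.one_lt_rpow_iff_of_pos (by norm_num)]
      exact Or.inl ⟨by norm_num, by nlinarith⟩
    simp only [hδdef]
    linarith
  set C : ℝ := ∑ i, (if p i = 0 then 0 else if lam i = 0 then
      p i * (2:ℝ) ^ (B * (0 - E i)) else 0) with hCdef
  have hC0 : 0 ≤ C := by
    refine Finset.sum_nonneg fun i _ => ?_
    by_cases h : p i = 0
    · simp [h]
    · by_cases h' : lam i = 0
      · simp only [h, if_false, h', if_true]
        exact mul_nonneg (hp0 i) (Real.rpow_nonneg (by norm_num) _)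
      · simp [h, h']
  set t₀ : ℝ := Real.logb 2 ((C + 1) / δ) / B with ht₀
  set f : ι → ℝ := fun i => if lam i = 0 then -t₀ else E i + A * Real.logb 2 (lam i / p i)
    with hfdef
  refine ⟨f, ?_⟩
  -- the linear term equals r
  have hfl : ∑ i, f i * lam i = r := by
    rw [hr, Gs, Dsum, Esum, Finset.mul_sum, ← Finset.sum_add_distrib]
    refine Finset.sum_congr rfl fun i _ => ?_
    by_cases h' : lam i = 0
    · simp [hfdef, h']
    · have hp : p i ≠ 0 := fun h => h' (hs i h)
      simp only [hfdef, h', if_false, if_neg hp]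
      ring
  -- the partition function
  set s : ℝ := (2:ℝ) ^ (-(B * t₀)) * C with hsdef
  have hs0 : 0 ≤ s := mul_nonneg (Real.rpow_nonneg (by norm_num) _) hC0
  have hZval : Zf B p E f = 1 + s := by
    have hsum : Zf B p E f = (∑ i, (if lam i = 0 then 0 else lam i)) +
        ∑ i, (2:ℝ) ^ (-(B * t₀)) * (if p i = 0 then 0 else if lam i = 0 then
          p i * (2:ℝ) ^ (B * (0 - E i)) else 0) := by
      rw [Zf, ← Finset.sum_add_distrib]
      refine Finset.sum_congr rfl fun i _ => ?_
      by_cases h : p i = 0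
      · simp [h, hs i h]
      · by_cases h' : lam i = 0
        · simp only [h, if_false, h', if_true, zero_add]
          have hfi : f i = -t₀ := by simp [hfdef, h']
          rw [hfi]
          have he : B * (-t₀ - E i) = -(B * t₀) + B * (0 - E i) := by ring
          rw [he, Real.rpow_add (by norm_num)]
          ring
        · simp only [h, if_false, h', if_false, mul_zero, add_zero]
          have hppos : 0 < p i := lt_of_le_of_ne (hp0 i) (Ne.symm h)
          have hlpos : 0 < lam i := lt_of_le_of_ne (h0 i) (Ne.symm h')
          have hfi : f i = E i + A * Real.logb 2 (lam i / p i) := by simp [hfdef, h']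
          rw [hfi]
          have hexp : B * (E i + A * Real.logb 2 (lam i / p i) - E i) =
              Real.logb 2 (lam i / p i) := by
            rw [hA]; field_simp; ring
          rw [hexp, Real.rpow_logb (by norm_num) (by norm_num) (div_pos hlpos hppos)]
          field_simp
    have h1' : (∑ i, (if lam i = 0 then 0 else lam i)) = 1 := by
      rw [← h1]
      exact Finset.sum_congr rfl fun i _ => by by_cases h : lam i = 0 <;> simp [h]
    rw [hsum, h1', ← Finset.mul_sum, ← hCdef, ← hsdef]
  have hsmall : s < δ := by
    have hBt : B * t₀ = Real.logb 2 ((C + 1) / δ) := by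
      rw [ht₀, mul_div_cancel₀ _ hB.ne']
    have hfrac : (0:ℝ) < (C + 1) / δ := div_pos (by linarith) hδ
    have h2 : (2:ℝ) ^ (-(B * t₀)) = δ / (C + 1) := by
      rw [hBt, Real.rpow_neg (by norm_num),
        Real.rpow_logb (by norm_num) (by norm_num) hfrac, inv_div]
    rw [hsdef, h2, div_mul_eq_mul_div, div_lt_iff₀ (by linarith)]
    nlinarith
  -- conclude
  have hGf : Gf A B p E f < r - x := by
    have hlt : Real.logb 2 (1 + s) < B * (r - x) := by
      have h1s : 1 + s < (2:ℝ) ^ (B * (r - x)) := by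
        simp only [hδdef] at hsmall
        linarith
      have := Real.logb_lt_logb (b := 2) (by norm_num) (by linarith : (0:ℝ) < 1 + s) h1s
      rwa [Real.logb_rpow (by norm_num) (by norm_num)] at this
    have : A * Real.logb 2 (1 + s) < A * (B * (r - x)) :=
      mul_lt_mul_of_pos_left hlt hApos
    have hAB : A * (B * (r - x)) = r - x := by rw [hA]; field_simp
    rw [Gf, hZval]
    linarith
  rw [hfl]
  linarith

lemma unbdd_sum_ne_one (hB : 0 < B) (hA : A = 1 / B)
    (hp0 : ∀ i, 0 ≤ p i) (hp1 : ∑ i, p i = 1)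
    (hlam : ∑ i, lam i ≠ 1) (x : ℝ) :
    ∃ f : ι → ℝ, x < ∑ i, f i * lam i - Gf A B p E f := by
  set G0 : ℝ := Gf A B p E (fun _ => 0) with hG0
  set sl : ℝ := ∑ i, lam i with hsl
  set t : ℝ := (x + G0 + 1) / (sl - 1) with htdef
  refine ⟨fun _ => t, ?_⟩
  have hshift : Gf A B p E (fun _ => t) = t + G0 := by
    have := Gf_shift (E := E) (g := fun _ => (0:ℝ)) hB hA hp0 hp1 t
    simpa using this
  have hsum : ∑ i, t * lam i = t * sl := by rw [Finset.mul_sum]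
  have hlin : ∑ i, (fun _ => t) i * lam i = t * sl := hsum
  rw [hlin, hshift]
  have hne : sl - 1 ≠ 0 := fun h => hlam (by linarith [sub_eq_zero.mp h])
  have ht : t * (sl - 1) = x + G0 + 1 := by
    rw [htdef, div_mul_cancel₀ _ hne]
  nlinarith [ht]

lemma unbdd_neg (hB : 0 < B) (hA : A = 1 / B)
    (hp0 : ∀ i, 0 ≤ p i) (hp1 : ∑ i, p i = 1)
    {i0 : ι} (hneg : lam i0 < 0) (x : ℝ) :
    ∃ f : ι → ℝ, x < ∑ i, f i * lam i - Gf A B p E f := by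
  set G0 : ℝ := Gf A B p E (fun _ => 0) with hG0
  set t : ℝ := (|x + G0| + 1) / (-lam i0) with htdef
  have htpos : 0 < t := div_pos (by positivity) (by linarith)
  set f : ι → ℝ := fun i => if i = i0 then -t else 0 with hfdef
  refine ⟨f, ?_⟩
  have hlin : ∑ i, f i * lam i = -t * lam i0 := by
    rw [Finset.sum_eq_single i0 (fun i _ hi => by simp [hfdef, hi])
      (fun h => absurd (Finset.mem_univ i0) h)]
    simp [hfdef]
  have hmono : Gf A B p E f ≤ G0 := by
    refine Gf_mono hB hA hp0 hp1 fun i => ?_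
    by_cases h : i = i0 <;> simp [hfdef, h, htpos.le]
  have ht : t * (-lam i0) = |x + G0| + 1 := by
    rw [htdef, div_mul_cancel₀ _ (by linarith : -lam i0 ≠ 0)]
  have habs : x + G0 ≤ |x + G0| := le_abs_self _
  rw [hlin]
  nlinarith [ht]

lemma unbdd_pos_off_supp (hB : 0 < B) (hA : A = 1 / B)
    (hp0 : ∀ i, 0 ≤ p i) (hp1 : ∑ i, p i = 1)
    {i0 : ι} (hp : p i0 = 0) (hpos : 0 < lam i0) (x : ℝ) :
    ∃ f : ι → ℝ, x < ∑ i, f i * lam i - Gf A B p E f := by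
  set G0 : ℝ := Gf A B p E (fun _ => 0) with hG0
  set t : ℝ := (|x + G0| + 1) / lam i0 with htdef
  set f : ι → ℝ := fun i => if i = i0 then t else 0 with hfdef
  refine ⟨f, ?_⟩
  have hlin : ∑ i, f i * lam i = t * lam i0 := by
    rw [Finset.sum_eq_single i0 (fun i _ hi => by simp [hfdef, hi])
      (fun h => absurd (Finset.mem_univ i0) h)]
    simp [hfdef]
  have hcongr : Gf A B p E f = G0 := by
    refine Gf_congr fun i hi => ?_
    have : i ≠ i0 := fun h => hi (h ▸ hp)
    simp [hfdef, this]
  have ht : t * lam i0 = |x + G0| + 1 := by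
    rw [htdef, div_mul_cancel₀ _ hpos.ne']
  have habs : x + G0 ≤ |x + G0| := le_abs_self _
  rw [hlin, hcongr]
  nlinarith

/-- `EReal` supremum of coerced reals equals a real bound approached from below. -/
lemma isup_coe_eq_coe {κ : Sort*} [Nonempty κ] (v : κ → ℝ) (r : ℝ)
    (hub : ∀ k, v k ≤ r) (happ : ∀ x : ℝ, x < r → ∃ k, x < v k) :
    (⨆ k, ((v k : ℝ) : EReal)) = (r : EReal) := by
  refine le_antisymm (iSup_le fun k => EReal.coe_le_coe_iff.mpr (hub k)) ?_
  refine le_of_forall_lt fun c hc => ?_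
  rw [lt_iSup_iff]
  induction c using EReal.rec with
  | bot => exact ⟨Classical.arbitrary κ, EReal.bot_lt_coe _⟩
  | coe x =>
    obtain ⟨k, hk⟩ := happ x (EReal.coe_lt_coe_iff.mp hc)
    exact ⟨k, EReal.coe_lt_coe_iff.mpr hk⟩
  | top => exact absurd hc (by simp)

lemma isup_coe_eq_top {κ : Sort*} (v : κ → ℝ) (h : ∀ x : ℝ, ∃ k, x < v k) :
    (⨆ k, ((v k : ℝ) : EReal)) = ⊤ := by
  rw [iSup_eq_top]
  intro b hb
  induction b using EReal.rec with
  | bot =>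
    obtain ⟨k, _⟩ := h 0
    exact ⟨k, EReal.bot_lt_coe _⟩
  | coe x =>
    obtain ⟨k, hk⟩ := h x
    exact ⟨k, EReal.coe_lt_coe_iff.mpr hk⟩
  | top => exact absurd hb (lt_irrefl _)

end
end Part3


/-- **Convex-conjugate pair for `f`-weighted Rényi entropies** (Lemma 5.1): for
`α ∈ (1,∞)` and a normalized state `ρ` on `Q⊗Q'⊗Ĉ` classical on `Ĉ`, the functions
`G_{α,ρ}` and `G*_{α,ρ}` are both convex, and each is the Legendre–Fenchel convex
conjugate of the other. -/
theorem fweighted_convex_conjugate_pair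
    (α : ℝ) (hα : 1 < α)
    (ρ : Matrix (Kh × (Q × Q')) (Kh × (Q × Q')) ℂ) (hρ : IsState ρ)
    (hclass : IsClassicalAlong (fun x => x.1) ρ) :
    ConvexOn ℝ Set.univ (Gfun α ρ) ∧
    (∀ x y : Kh → ℝ, ∀ t : ℝ, 0 ≤ t → t ≤ 1 →
      Gstar α ρ (t • x + (1 - t) • y) ≤
        ((t : ℝ) : EReal) * Gstar α ρ x + ((1 - t : ℝ) : EReal) * Gstar α ρ y) ∧
    (∀ lam : Kh → ℝ,
      (⨆ f : Kh → ℝ, (((∑ h, f h * lam h) - Gfun α ρ f : ℝ) : EReal)) = Gstar α ρ lam) ∧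
    (∀ f : Kh → ℝ,
      (⨆ lam : Kh → ℝ, (((∑ h, f h * lam h : ℝ) : EReal) - Gstar α ρ lam)) =
        ((Gfun α ρ f : ℝ) : EReal)) := by
  classical
  have hα0 : (0:ℝ) < α := by linarith
  have hα1 : (0:ℝ) < α - 1 := by linarith
  set A : ℝ := α / (α - 1) with hAdef
  set B : ℝ := (α - 1) / α with hBdef
  have hB : 0 < B := div_pos hα1 hα0
  have hA : A = 1 / B := (one_div_div _ _).symm
  have hApos : 0 < A := div_pos hα0 hα1
  set p : Kh → ℝ := hprob ρ with hpdef
  set E : Kh → ℝ := fun h => (condHup (ENNReal.ofReal α) (hcondSt ρ h)).toReal with hEdef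
  -- positivity of the classical probabilities
  have hdiag : ∀ z : Kh × (Q × Q'), 0 ≤ (ρ z z).re := by
    intro z
    have h2 := Matrix.PosSemidef.dotProduct_mulVec_nonneg hρ.1 (Pi.single z 1)
    have he : (dotProduct (star (Pi.single z 1)) (ρ.mulVec (Pi.single z 1))) = ρ z z := by
      simp [dotProduct, Matrix.mulVec, Pi.single_apply, Finset.mul_sum]
    rw [he] at h2
    exact (Complex.le_def.mp h2).1
  have hp0 : ∀ h, 0 ≤ p h := by
    intro h
    rw [hpdef, hprob, Complex.re_sum]
    exact Finset.sum_nonneg fun q _ => hdiag (h, q)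
  have hp1 : ∑ h, p h = 1 := by
    have h1 : ∑ z : Kh × (Q × Q'), ρ z z = 1 := by
      simpa [Matrix.trace, Matrix.diag] using hρ.2
    have h1' : ∑ z : Kh × (Q × Q'), (ρ z z).re = 1 := by
      have := congrArg Complex.re h1
      simpa [Complex.re_sum] using this
    have h2 : ∑ h : Kh, ∑ q : Q × Q', (ρ (h, q) (h, q)).re = 1 := by
      rw [← h1']
      exact (Fintype.sum_prod_type (f := fun z => (ρ z z).re)).symm
    calc ∑ h, p h = ∑ h : Kh, ∑ q : Q × Q', (ρ (h, q) (h, q)).re := by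
          simp only [hpdef, hprob, Complex.re_sum]
      _ = 1 := h2
  -- identification with the abstract setup
  have hGfun : ∀ f : Kh → ℝ, Gfun α ρ f = QITAux.Gf A B p E f := fun f => rfl
  have gstar_eq : ∀ lam : Kh → ℝ, ((∀ h, 0 ≤ lam h) ∧ ∑ h, lam h = 1) →
      (∀ h, p h = 0 → lam h = 0) →
      Gstar α ρ lam = ((QITAux.Gs A p E lam : ℝ) : EReal) := by
    intro lam hsim hsupp
    unfold Gstar
    rw [if_pos hsim]
    have hclD : clD 1 lam (hprob ρ) = ((QITAux.Dsum (hprob ρ) lam : ℝ) : EReal) := by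
      unfold clD
      rw [if_pos rfl, if_pos hsupp, hsim.2, div_one]
      rfl
    rw [hclD, ← EReal.coe_mul, ← EReal.coe_add]
    rfl
  have gstar_top₁ : ∀ lam : Kh → ℝ, ((∀ h, 0 ≤ lam h) ∧ ∑ h, lam h = 1) →
      ¬ (∀ h, p h = 0 → lam h = 0) → Gstar α ρ lam = ⊤ := by
    intro lam hsim hsupp
    unfold Gstar
    rw [if_pos hsim]
    have hclD : clD 1 lam (hprob ρ) = ⊤ := by
      unfold clD
      rw [if_pos rfl, if_neg hsupp]
    rw [hclD, EReal.coe_mul_top_of_pos hApos, EReal.top_add_coe]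
  have gstar_top₂ : ∀ lam : Kh → ℝ, ¬ ((∀ h, 0 ≤ lam h) ∧ ∑ h, lam h = 1) →
      Gstar α ρ lam = ⊤ := by
    intro lam hsim
    unfold Gstar
    rw [if_neg hsim]
  have gcases : ∀ lam : Kh → ℝ,
      (((∀ h, 0 ≤ lam h) ∧ ∑ h, lam h = 1) ∧ (∀ h, p h = 0 → lam h = 0) ∧
        Gstar α ρ lam = ((QITAux.Gs A p E lam : ℝ) : EReal)) ∨ Gstar α ρ lam = ⊤ := by
    intro lam
    by_cases hsim : (∀ h, 0 ≤ lam h) ∧ ∑ h, lam h = 1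
    · by_cases hsupp : ∀ h, p h = 0 → lam h = 0
      · exact Or.inl ⟨hsim, hsupp, gstar_eq lam hsim hsupp⟩
      · exact Or.inr (gstar_top₁ lam hsim hsupp)
    · exact Or.inr (gstar_top₂ lam hsim)
  refine ⟨?_, ?_, ?_, ?_⟩
  -- (1) convexity of Gfun
  · refine ⟨convex_univ, ?_⟩
    intro x _ y _ a b ha hb hab
    simp only [smul_eq_mul]
    have hz : (a • x + b • y) = fun h => a * x h + b * y h := by
      funext h; simp [smul_eq_mul]
    rw [hz, hGfun, hGfun, hGfun]
    set ls := QITAux.lamstar B p E (fun h => a * x h + b * y h) with hls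
    have hls0 := fun i => QITAux.lamstar_nonneg (B := B) (E := E)
      (f := fun h => a * x h + b * y h) hp0 hp1 i
    have hls1 := QITAux.lamstar_sum (B := B) (E := E)
      (f := fun h => a * x h + b * y h) hp0 hp1
    have hlss := fun i hi => QITAux.lamstar_supp (B := B) (E := E) (p := p)
      (f := fun h => a * x h + b * y h) i hi
    have hatt := QITAux.attain (p := p) (E := E)
      (f := fun h => a * x h + b * y h) hB hA hp0 hp1
    have hgx := QITAux.gibbs (p := p) (E := E) (f := x) (lam := ls)
      hB hA hp0 hp1 hls0 hls1 hlss
    have hgy := QITAux.gibbs (p := p) (E := E) (f := y) (lam := ls)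
      hB hA hp0 hp1 hls0 hls1 hlss
    have hsplit : ∑ i, (a * x i + b * y i) * ls i =
        a * (∑ i, x i * ls i) + b * (∑ i, y i * ls i) := by
      rw [Finset.mul_sum, Finset.mul_sum, ← Finset.sum_add_distrib]
      exact Finset.sum_congr rfl fun i _ => by ring
    rw [hsplit, ← hls] at hatt
    have h1 : a * (∑ i, x i * ls i) ≤ a * (QITAux.Gf A B p E x + QITAux.Gs A p E ls) :=
      mul_le_mul_of_nonneg_left hgx ha
    have h2 : b * (∑ i, y i * ls i) ≤ b * (QITAux.Gf A B p E y + QITAux.Gs A p E ls) :=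
      mul_le_mul_of_nonneg_left hgy hb
    have hGs : a * QITAux.Gs A p E ls + b * QITAux.Gs A p E ls = QITAux.Gs A p E ls := by
      rw [← add_mul, hab, one_mul]
    linarith [hatt, h1, h2, hGs]
  -- (2) convexity of Gstar
  · intro x y t ht0 ht1
    rcases gcases x with ⟨hsx, hspx, hx⟩ | hx
    · rcases gcases y with ⟨hsy, hspy, hy⟩ | hy
      · -- both finite
        have hz : (t • x + (1 - t) • y) = fun h => t * x h + (1 - t) * y h := by
          funext h; simp [smul_eq_mul]
        have hz0 : ∀ h, 0 ≤ t * x h + (1 - t) * y h := fun h =>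
          add_nonneg (mul_nonneg ht0 (hsx.1 h)) (mul_nonneg (by linarith) (hsy.1 h))
        have hz1 : ∑ h, (t * x h + (1 - t) * y h) = 1 := by
          rw [Finset.sum_add_distrib, ← Finset.mul_sum, ← Finset.mul_sum, hsx.2, hsy.2]
          ring
        have hzs : ∀ h, p h = 0 → t * x h + (1 - t) * y h = 0 := fun h hp => by
          rw [hspx h hp, hspy h hp]; ring
        rw [hz, gstar_eq _ ⟨hz0, hz1⟩ hzs, hx, hy, ← EReal.coe_mul, ← EReal.coe_mul,
          ← EReal.coe_add, EReal.coe_le_coe_iff]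
        exact Part2.gs_convex hApos.le hsx.1 hspx hsy.1 hspy ht0 ht1
      · -- Gstar y = ⊤
        by_cases ht : t = 1
        · subst ht
          have e : (1:ℝ) • x + (1 - 1 : ℝ) • y = x := by
            simp
          rw [e]
          simp only [sub_self, EReal.coe_zero, zero_mul, add_zero, EReal.coe_one, one_mul]
          exact le_refl _
        · have h1t : (0:ℝ) < 1 - t := by cases lt_or_eq_of_le ht1 with
            | inl h => linarith
            | inr h => exact absurd h ht
          rw [hy, EReal.coe_mul_top_of_pos h1t, hx, ← EReal.coe_mul, EReal.coe_add_top]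
          exact le_top
    · -- Gstar x = ⊤
      by_cases ht : t = 0
      · subst ht
        have e : (0:ℝ) • x + (1 - 0 : ℝ) • y = y := by
          simp
        rw [e]
        simp only [EReal.coe_zero, zero_mul, zero_add, sub_zero, EReal.coe_one, one_mul]
        exact le_refl _
      · have htpos : 0 < t := lt_of_le_of_ne ht0 (Ne.symm ht)
        have hrhs : ((t : ℝ) : EReal) * Gstar α ρ x + ((1 - t : ℝ) : EReal) * Gstar α ρ y
            = ⊤ := by
          rw [hx, EReal.coe_mul_top_of_pos htpos]
          rcases gcases y with ⟨_, _, hy⟩ | hy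
          · rw [hy, ← EReal.coe_mul, EReal.top_add_coe]
          · rw [hy]
            by_cases h1t : (1:ℝ) - t = 0
            · rw [h1t]; simp
            · have : (0:ℝ) < 1 - t := lt_of_le_of_ne (by linarith) (Ne.symm h1t)
              rw [EReal.coe_mul_top_of_pos this, EReal.top_add_top]
        rw [hrhs]
        exact le_top
  -- (3) conjugate of Gfun is Gstar
  · intro lam
    by_cases hsim : (∀ h, 0 ≤ lam h) ∧ ∑ h, lam h = 1
    · by_cases hsupp : ∀ h, p h = 0 → lam h = 0
      · rw [gstar_eq lam hsim hsupp]
        refine Part3.isup_coe_eq_coe _ _ (fun f => ?_) (fun x hx => ?_)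
        · have := QITAux.gibbs (p := p) (E := E) (f := f) (lam := lam)
            hB hA hp0 hp1 hsim.1 hsim.2 hsupp
          rw [hGfun]
          linarith
        · obtain ⟨f, hf⟩ := Part3.approx (p := p) (E := E) (lam := lam)
            hB hA hp0 hp1 hsim.1 hsim.2 hsupp hx
          exact ⟨f, by rw [hGfun]; linarith⟩
      · rw [gstar_top₁ lam hsim hsupp]
        refine Part3.isup_coe_eq_top _ (fun x => ?_)
        push_neg at hsupp
        obtain ⟨h0, hph0, hlh0⟩ := hsupp
        have hpos : 0 < lam h0 := lt_of_le_of_ne (hsim.1 h0) (Ne.symm hlh0)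
        obtain ⟨f, hf⟩ := Part3.unbdd_pos_off_supp (p := p) (E := E) (lam := lam)
          hB hA hp0 hp1 hph0 hpos x
        exact ⟨f, by rw [hGfun]; linarith⟩
    · rw [gstar_top₂ lam hsim]
      refine Part3.isup_coe_eq_top _ (fun x => ?_)
      by_cases hsum : ∑ h, lam h = 1
      · have hneg : ∃ h0, lam h0 < 0 := by
          by_contra hc
          push_neg at hc
          exact hsim ⟨hc, hsum⟩
        obtain ⟨h0, hh0⟩ := hneg
        obtain ⟨f, hf⟩ := Part3.unbdd_neg (p := p) (E := E) (lam := lam)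
          hB hA hp0 hp1 hh0 x
        exact ⟨f, by rw [hGfun]; linarith⟩
      · obtain ⟨f, hf⟩ := Part3.unbdd_sum_ne_one (p := p) (E := E) (lam := lam)
          hB hA hp0 hp1 hsum x
        exact ⟨f, by rw [hGfun]; linarith⟩
  -- (4) conjugate of Gstar is Gfun
  · intro f
    refine le_antisymm (iSup_le fun lam => ?_) ?_
    · rcases gcases lam with ⟨hsim, hsupp, heq⟩ | heq
      · rw [heq, ← EReal.coe_sub, EReal.coe_le_coe_iff, hGfun]
        have := QITAux.gibbs (p := p) (E := E) (f := f) (lam := lam)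
          hB hA hp0 hp1 hsim.1 hsim.2 hsupp
        linarith
      · rw [heq, EReal.sub_top]
        exact bot_le
    · set ls := QITAux.lamstar B p E f with hls
      have hls0 := fun i => QITAux.lamstar_nonneg (B := B) (E := E) (f := f) hp0 hp1 i
      have hls1 := QITAux.lamstar_sum (B := B) (E := E) (f := f) hp0 hp1
      have hlss := fun i hi => QITAux.lamstar_supp (B := B) (E := E) (p := p) (f := f) i hi
      have hatt := QITAux.attain (p := p) (E := E) (f := f) hB hA hp0 hp1
      refine le_trans ?_ (le_iSup _ ls)
      rw [gstar_eq ls ⟨hls0, hls1⟩ hlss, ← EReal.coe_sub, EReal.coe_le_coe_iff, hGfun]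
      linarith


end Conjugate

end QIT
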